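/- Let S ≥ 1 and k ≥ 0 be integers. Then the (k+1)×(k+1) Hankel matrix with (i,j)-entry (i+j+1)! / (S+i+j+1)!, for 0 ≤ i,j ≤ k, is positive definite. -/

import Mathlib

open intervalIntegral MeasureTheory
open scoped Nat

lemma prodAux (n m : ℕ) :
    ((n ! : ℂ)) * ∏ j ∈ Finset.range (m + 1), ((n:ℂ) + 1 + j) = ((n + m + 1)! : ℂ) := by
  induction m with
  | zero =>
      rw [show n + 0 + 1 = n + 1 by ring, Nat.factorial_succ]
      simp
      push_cast; ring
  | succ k ih =>
      rw [Finset.prod_range_succ, ← mul_assoc, ih,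
        show n + (k + 1) + 1 = (n + k + 1) + 1 by ring, Nat.factorial_succ (n + k + 1)]
      push_cast; ring

lemma betaNat (n m : ℕ) :
    ∫ x in (0:ℝ)..1, x ^ n * (1 - x) ^ m = (n ! * m ! : ℝ) / ((n + m + 1)! : ℝ) := by
  have h := Complex.betaIntegral_eval_nat_add_one_right
    (u := ((n : ℂ) + 1)) (by simp; positivity) m
  rw [Complex.betaIntegral] at h
  have h2 : ∀ x : ℝ, ((x:ℂ)) ^ ((n:ℂ) + 1 - 1) * (1 - (x:ℂ)) ^ ((m:ℂ) + 1 - 1)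
      = ((x ^ n * (1 - x) ^ m : ℝ) : ℂ) := by
    intro x
    rw [add_sub_cancel_right, add_sub_cancel_right, Complex.cpow_natCast, Complex.cpow_natCast]
    push_cast; ring
  rw [intervalIntegral.integral_congr (fun x _ => h2 x), intervalIntegral.integral_ofReal] at h
  have hprod := prodAux n m
  have hne : ((n ! : ℂ)) ≠ 0 := by exact_mod_cast Nat.factorial_ne_zero n
  have hfactne : (((n + m + 1)! : ℂ)) ≠ 0 := by exact_mod_cast Nat.factorial_ne_zero _
  have hprodne : (∏ j ∈ Finset.range (m + 1), ((n:ℂ) + 1 + j)) ≠ 0 := by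
    intro h0
    rw [h0, mul_zero] at hprod
    exact hfactne hprod.symm
  have : ((∫ x in (0:ℝ)..1, x ^ n * (1 - x) ^ m : ℝ) : ℂ)
      = ((n ! * m ! : ℝ) : ℂ) / (((n + m + 1)! : ℝ) : ℂ) := by
    rw [h, div_eq_div_iff hprodne (by push_cast at hfactne ⊢; exact hfactne)]
    push_cast
    rw [← hprod]
    push_cast; ring
  exact_mod_cast this

/-- for integers `S ≥ 1` and `k ≥ 0`, the Hankel matrix with entries
`(i+j+1)! / (S+i+j+1)!` is positive definite. -/
theorem hankel_factorial_ratio_shifted_posDef (S k : ℕ) (hS : 1 ≤ S) :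
    (Matrix.of (fun i j : Fin (k + 1) =>
        (Nat.factorial ((i : ℕ) + (j : ℕ) + 1) : ℝ) /
          (Nat.factorial (S + (i : ℕ) + (j : ℕ) + 1) : ℝ))).PosDef := by
  obtain ⟨c, rfl⟩ : ∃ c, S = c + 1 := ⟨S - 1, (Nat.succ_pred_eq_of_pos hS).symm⟩
  have hcne : (0:ℝ) < (c ! : ℝ) := by exact_mod_cast Nat.factorial_pos c
  -- integral representation of entries
  have hM : ∀ i j : Fin (k + 1),
      ((((i:ℕ) + (j:ℕ) + 1)! : ℝ)) / (((c + 1 + (i:ℕ) + (j:ℕ) + 1)! : ℝ))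
        = (1 / (c ! : ℝ)) * ∫ t in (0:ℝ)..1, t ^ ((i:ℕ) + (j:ℕ) + 1) * (1 - t) ^ c := by
    intro i j
    rw [betaNat ((i:ℕ) + (j:ℕ) + 1) c]
    rw [show (i:ℕ) + (j:ℕ) + 1 + c + 1 = c + 1 + (i:ℕ) + (j:ℕ) + 1 by ring]
    field_simp
  rw [Matrix.posDef_iff_dotProduct_mulVec]
  constructor
  · -- Hermitian
    ext i j
    simp only [Matrix.conjTranspose_apply, Matrix.of_apply, star_trivial]
    rw [show (j:ℕ) + (i:ℕ) = (i:ℕ) + (j:ℕ) by ring,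
      show c + 1 + (j:ℕ) + (i:ℕ) = c + 1 + (i:ℕ) + (j:ℕ) by ring]
  · intro x hx
    simp only [dotProduct, Matrix.mulVec, Matrix.of_apply, star_trivial,
      RCLike.re_to_real]
    -- quadratic form as an integral
    have key : ∑ i, x i * ∑ j : Fin (k+1), ((((i:ℕ) + (j:ℕ) + 1)! : ℝ))
          / (((c + 1 + (i:ℕ) + (j:ℕ) + 1)! : ℝ)) * x j
        = (1 / (c ! : ℝ)) *
          ∫ t in (0:ℝ)..1, t * (1 - t) ^ c * (∑ i, x i * t ^ (i:ℕ)) ^ 2 := by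
      have swap : ∀ i : Fin (k+1),
          ∑ j : Fin (k+1), ((((i:ℕ) + (j:ℕ) + 1)! : ℝ)) / (((c + 1 + (i:ℕ) + (j:ℕ) + 1)! : ℝ)) * x j
          = (1 / (c ! : ℝ)) *
            ∫ t in (0:ℝ)..1, ∑ j, x j * (t ^ ((i:ℕ) + (j:ℕ) + 1) * (1 - t) ^ c) := by
        intro i
        rw [intervalIntegral.integral_finset_sum
          (fun j _ => (Continuous.intervalIntegrable (by fun_prop) 0 1)), Finset.mul_sum]
        refine Finset.sum_congr rfl fun j _ => ?_
        rw [hM i j, intervalIntegral.integral_const_mul]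
        ring
      calc ∑ i, x i * ∑ j : Fin (k+1), ((((i:ℕ) + (j:ℕ) + 1)! : ℝ))
              / (((c + 1 + (i:ℕ) + (j:ℕ) + 1)! : ℝ)) * x j
          = (1 / (c ! : ℝ)) * ∫ t in (0:ℝ)..1,
              ∑ i, ∑ j, x i * (x j * (t ^ ((i:ℕ) + (j:ℕ) + 1) * (1 - t) ^ c)) := by
            rw [intervalIntegral.integral_finset_sum
              (fun i _ => (Continuous.intervalIntegrable (by fun_prop) 0 1)), Finset.mul_sum]
            refine Finset.sum_congr rfl fun i _ => ?_
            rw [swap i]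
            have hmul : ∀ t : ℝ, ∑ j : Fin (k+1),
                x i * (x j * (t ^ ((i:ℕ) + (j:ℕ) + 1) * (1 - t) ^ c))
                = x i * ∑ j : Fin (k+1), x j * (t ^ ((i:ℕ) + (j:ℕ) + 1) * (1 - t) ^ c) :=
              fun t => (Finset.mul_sum _ _ _).symm
            rw [intervalIntegral.integral_congr (fun t _ => hmul t),
              intervalIntegral.integral_const_mul]
            ring
        _ = (1 / (c ! : ℝ)) *
              ∫ t in (0:ℝ)..1, t * (1 - t) ^ c * (∑ i, x i * t ^ (i:ℕ)) ^ 2 := by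
            congr 1
            refine intervalIntegral.integral_congr fun t _ => ?_
            rw [pow_two, Finset.sum_mul_sum]
            rw [Finset.mul_sum]
            refine Finset.sum_congr rfl fun i _ => ?_
            rw [Finset.mul_sum]
            refine Finset.sum_congr rfl fun j _ => ?_
            rw [pow_succ, pow_add]
            ring
    rw [key]
    refine mul_pos (by positivity) ?_
    -- find point where polynomial is nonzero
    have hpt : ∃ t₀ ∈ Set.Ioo (0:ℝ) 1, (∑ i : Fin (k+1), x i * t₀ ^ (i:ℕ)) ≠ 0 := by
      set P : Polynomial ℝ := ∑ i : Fin (k+1), Polynomial.C (x i) * Polynomial.X ^ (i:ℕ)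
        with hPdef
      obtain ⟨i, hi⟩ := Function.ne_iff.mp hx
      have hcoeff : P.coeff (i:ℕ) = x i := by
        simp only [hPdef, Polynomial.finset_sum_coeff, Polynomial.coeff_C_mul,
          Polynomial.coeff_X_pow, mul_ite, mul_one, mul_zero, Fin.val_eq_val]
        simp
      have hP : P ≠ 0 := fun h => hi (by rw [← hcoeff, h, Polynomial.coeff_zero]; rfl)
      have hroots := P.finite_setOf_isRoot hP
      have hinf : (Set.Ioo (0:ℝ) 1).Infinite := Set.Ioo_infinite (by norm_num)
      obtain ⟨t₀, ht₀⟩ := (hinf.diff hroots).nonempty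
      refine ⟨t₀, ht₀.1, ?_⟩
      have heval : (∑ i : Fin (k+1), x i * t₀ ^ (i:ℕ)) = P.eval t₀ := by
        simp [hPdef, Polynomial.eval_finset_sum]
      rw [heval]
      exact ht₀.2
    obtain ⟨t₀, ht₀mem, ht₀ne⟩ := hpt
    have := intervalIntegral.integral_lt_integral_of_continuousOn_of_le_of_exists_lt
      (f := fun _ => (0:ℝ)) (g := fun t => t * (1 - t) ^ c * (∑ i, x i * t ^ (i:ℕ)) ^ 2)
      (a := 0) (b := 1) one_pos (continuousOn_const)
      (Continuous.continuousOn (by fun_prop))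
      (fun t ht => by
        have h1 : 0 ≤ t := le_of_lt ht.1
        have h2 : (0:ℝ) ≤ 1 - t := by linarith [ht.2]
        positivity)
      ⟨t₀, ⟨le_of_lt ht₀mem.1, le_of_lt ht₀mem.2⟩, by
        have h1 : 0 < t₀ := ht₀mem.1
        have h2 : (0:ℝ) < 1 - t₀ := by linarith [ht₀mem.2]
        positivity⟩
    simpa using this
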